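/- Let z be a nonzero complex number, and let P, Q, φ, ρ : ℤ → ℂ with P(n) ≠ 0 and ρ(n) ≠ 0 for all n. Suppose φ satisfies the spectral problem φ(n+1) − P(n)φ(n) = z(φ(n) − Q(n)φ(n−1)) for all n, and ρ satisfies the gauge condition ρ(n)Q(n) = ρ(n−1)P(n) for all n. Then ψ(n) = ρ(n)φ(n) satisfies ψ(n−1) − P̂(n)ψ(n) = z⁻¹(ψ(n) − Q̂(n)ψ(n+1)) for all n, where P̂(n) = 1/P(n) and Q̂(n) = Q(n+1)/(P(n)P(n+1)). That is, the gauge transformation ψ = ρφ maps the Ablowitz–Ladik spectral problem with data (P, Q, z) to the spectral problem with reversed shift, data (P̂, Q̂), and spectral parameter z⁻¹. -/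

import Mathlib

/-- The gauge transformation `ψ = ρφ` maps the Ablowitz–Ladik spectral
problem `φ(n+1) − P(n)φ(n) = z(φ(n) − Q(n)φ(n−1))` with data `(P, Q, z)` to the spectral
problem with reversed shift, data `P̂(n) = 1/P(n)`, `Q̂(n) = Q(n+1)/(P(n)P(n+1))`, and
spectral parameter `z⁻¹`, provided `ρ` satisfies the gauge condition
`ρ(n)Q(n) = ρ(n−1)P(n)`. -/
theorem gauge_transformation_spectral_problem
    (z : ℂ) (hz : z ≠ 0) (P Q φ ρ : ℤ → ℂ)
    (hP : ∀ n : ℤ, P n ≠ 0) (hρ : ∀ n : ℤ, ρ n ≠ 0)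
    (hspec : ∀ n : ℤ, φ (n + 1) - P n * φ n = z * (φ n - Q n * φ (n - 1)))
    (hgauge : ∀ n : ℤ, ρ n * Q n = ρ (n - 1) * P n)
    (ψ Phat Qhat : ℤ → ℂ)
    (hψ : ∀ n : ℤ, ψ n = ρ n * φ n)
    (hPhat : ∀ n : ℤ, Phat n = 1 / P n)
    (hQhat : ∀ n : ℤ, Qhat n = Q (n + 1) / (P n * P (n + 1))) :
    ∀ n : ℤ, ψ (n - 1) - Phat n * ψ n = z⁻¹ * (ψ n - Qhat n * ψ (n + 1)) := by
  intro n
  have pn := hP n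
  have pn1 := hP (n + 1)
  have h1 := hspec n
  have h2 := hgauge n
  have h3 := hgauge (n + 1)
  simp only [add_sub_cancel_right] at h3
  rw [hψ, hψ, hψ, hPhat, hQhat]
  field_simp
  linear_combination (ρ n * P (n + 1)) * h1
    + (-z * φ (n - 1) * P (n + 1)) * h2 + (φ (n + 1)) * h3
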